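/- Let A, B ∈ M₂(ℤ) be trace-zero matrices of determinant -N (N > 0) such that for no M ∈ SL₂(ℤ) is MAM⁻¹ equal to B or -B. Then for every M ∈ SL₂(ℤ), the geodesics M·C_A and C_B (where C_A = {z in the upper half-plane : Az = conj(z)}) are distinct; in particular two distinct geodesics in the upper half-plane intersect in at most one point. -/

import Mathlib

/-- The geodesic C_A = {z ∈ H : A·z = conj z} attached to an integral matrix A. -/
def geodC (A : Matrix (Fin 2) (Fin 2) ℤ) : Set ℂ :=
  {z : ℂ | 0 < z.im ∧
    ((A 0 0 : ℂ) * z + (A 0 1 : ℂ)) / ((A 1 0 : ℂ) * z + (A 1 1 : ℂ)) = (starRingEnd ℂ) z}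

/-- The Möbius action of an integral matrix on ℂ. -/
noncomputable def moebius (M : Matrix (Fin 2) (Fin 2) ℤ) (z : ℂ) : ℂ :=
  ((M 0 0 : ℂ) * z + (M 0 1 : ℂ)) / ((M 1 0 : ℂ) * z + (M 1 1 : ℂ))

lemma denom_ne (A : Matrix (Fin 2) (Fin 2) ℤ) (hdet : A.det ≠ 0) (z : ℂ) (hz : 0 < z.im) :
    ((A 1 0 : ℂ) * z + (A 1 1 : ℂ)) ≠ 0 := by
  intro h
  rcases eq_or_ne (A 1 0) 0 with hc | hc
  · rw [Matrix.det_fin_two, hc] at hdet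
    simp only [hc] at h
    push_cast at h
    simp only [Int.cast_zero, zero_mul, zero_add] at h
    have : A 1 1 = 0 := by exact_mod_cast h
    simp [this] at hdet
  · have him : ((A 1 0 : ℂ) * z + (A 1 1 : ℂ)).im = (A 1 0 : ℝ) * z.im := by
      simp [Complex.add_im, Complex.mul_im]
    rw [h] at him
    simp only [Complex.zero_im] at him
    have : (A 1 0 : ℝ) = 0 := by
      rcases mul_eq_zero.mp him.symm with h' | h'
      · exact h'
      · exact absurd h' (ne_of_gt hz)
    exact hc (by exact_mod_cast this)

lemma mem_geodC_iff (A : Matrix (Fin 2) (Fin 2) ℤ) (htr : A.trace = 0) (hdet : A.det ≠ 0)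
    (z : ℂ) : z ∈ geodC A ↔ 0 < z.im ∧
      (A 1 0 : ℝ) * (z.re ^ 2 + z.im ^ 2) - 2 * (A 0 0 : ℝ) * z.re - (A 0 1 : ℝ) = 0 := by
  have htr' : A 1 1 = -A 0 0 := by
    rw [Matrix.trace_fin_two] at htr; linarith
  constructor
  · rintro ⟨hz, heq⟩
    refine ⟨hz, ?_⟩
    have hd := denom_ne A hdet z hz
    rw [div_eq_iff hd] at heq
    have hre := congrArg Complex.re heq
    simp only [Complex.add_re, Complex.mul_re, Complex.intCast_re, Complex.intCast_im,
      Complex.conj_re, Complex.conj_im, Complex.mul_im, Complex.add_im, htr'] at hre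
    push_cast at hre ⊢
    nlinarith [hre]
  · rintro ⟨hz, heq⟩
    refine ⟨hz, ?_⟩
    have hd := denom_ne A hdet z hz
    rw [div_eq_iff hd]
    apply Complex.ext
    · simp only [Complex.add_re, Complex.mul_re, Complex.intCast_re, Complex.intCast_im,
        Complex.conj_re, Complex.conj_im, Complex.mul_im, Complex.add_im, htr']
      push_cast at heq ⊢
      nlinarith [heq]
    · simp only [Complex.add_im, Complex.mul_im, Complex.intCast_re, Complex.intCast_im,
        Complex.conj_re, Complex.conj_im, Complex.mul_re, Complex.add_re, htr']
      push_cast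
      ring

lemma mem_geodC_iff' (A : Matrix (Fin 2) (Fin 2) ℤ) (hdet : A.det ≠ 0) (z : ℂ) :
    z ∈ geodC A ↔ 0 < z.im ∧
      (A 0 0 : ℂ) * z + (A 0 1 : ℂ) =
        (starRingEnd ℂ) z * ((A 1 0 : ℂ) * z + (A 1 1 : ℂ)) := by
  constructor
  · rintro ⟨hz, heq⟩
    exact ⟨hz, by rw [div_eq_iff (denom_ne A hdet z hz)] at heq; exact heq⟩
  · rintro ⟨hz, heq⟩
    exact ⟨hz, by rw [div_eq_iff (denom_ne A hdet z hz)]; exact heq⟩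

lemma sl_det (M : Matrix.SpecialLinearGroup (Fin 2) ℤ) :
    (M : Matrix (Fin 2) (Fin 2) ℤ) 0 0 * M 1 1 - M 0 1 * M 1 0 = 1 := by
  have := M.2
  rw [Matrix.det_fin_two] at this
  exact this

lemma sl_denom_ne (M : Matrix.SpecialLinearGroup (Fin 2) ℤ) (z : ℂ) (hz : 0 < z.im) :
    (((M : Matrix (Fin 2) (Fin 2) ℤ) 1 0 : ℂ) * z + (M 1 1 : ℂ)) ≠ 0 := by
  apply denom_ne _ _ _ hz
  rw [M.2]; norm_num

lemma moebius_im (M : Matrix.SpecialLinearGroup (Fin 2) ℤ) (z : ℂ) (hz : 0 < z.im) :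
    0 < (moebius (M : Matrix (Fin 2) (Fin 2) ℤ) z).im := by
  have hd := sl_denom_ne M z hz
  have hn : 0 < Complex.normSq (((M : Matrix (Fin 2) (Fin 2) ℤ) 1 0 : ℂ) * z + (M 1 1 : ℂ)) :=
    Complex.normSq_pos.mpr hd
  have hdet := sl_det M
  have hdetR : ((M : Matrix (Fin 2) (Fin 2) ℤ) 0 0 : ℝ) * (M 1 1 : ℝ)
      - (M 0 1 : ℝ) * (M 1 0 : ℝ) = 1 := by exact_mod_cast hdet
  have : (moebius (M : Matrix (Fin 2) (Fin 2) ℤ) z).im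
      = z.im / Complex.normSq (((M : Matrix (Fin 2) (Fin 2) ℤ) 1 0 : ℂ) * z + (M 1 1 : ℂ)) := by
    rw [moebius, Complex.div_im, div_sub_div_same]
    congr 1
    simp only [Complex.add_im, Complex.add_re, Complex.mul_im, Complex.mul_re,
      Complex.intCast_re, Complex.intCast_im]
    ring_nf
    nlinarith [hdetR]
  rw [this]
  exact div_pos hz hn

lemma key (p q r s a b c d zz zb : ℂ) (hd1 : r*zz+s ≠ 0) (hd2 : r*zb+s ≠ 0)
    (h : a*zz+b = zb*(c*zz+d)) :
    (p*a*s - p*b*r + q*c*s - q*d*r) * ((p*zz+q)/(r*zz+s)) + (p*(b*p-a*q)+q*(d*p-c*q))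
      = ((p*zb+q)/(r*zb+s)) *
        ((r*(a*s-b*r)+s*(c*s-d*r)) * ((p*zz+q)/(r*zz+s)) + (r*(b*p-a*q)+s*(d*p-c*q))) := by
  field_simp
  linear_combination ((p*s-q*r)^2) * h

lemma inv_coe (M : Matrix.SpecialLinearGroup (Fin 2) ℤ) :
    ((M⁻¹ : Matrix.SpecialLinearGroup (Fin 2) ℤ) : Matrix (Fin 2) (Fin 2) ℤ)
      = ![![M 1 1, -(M 0 1)], ![-(M 1 0), M 0 0]] := by
  rw [Matrix.SpecialLinearGroup.SL2_inv_expl]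

lemma det_conj (M : Matrix.SpecialLinearGroup (Fin 2) ℤ) (A : Matrix (Fin 2) (Fin 2) ℤ) :
    ((M : Matrix (Fin 2) (Fin 2) ℤ) * A * (M⁻¹ : Matrix.SpecialLinearGroup (Fin 2) ℤ)).det
      = A.det := by
  rw [Matrix.det_mul, Matrix.det_mul, M.2, (M⁻¹).2]
  ring

lemma step (M : Matrix.SpecialLinearGroup (Fin 2) ℤ) (A : Matrix (Fin 2) (Fin 2) ℤ)
    (hdet : A.det ≠ 0) {z : ℂ} (hz : z ∈ geodC A) :
    moebius (M : Matrix (Fin 2) (Fin 2) ℤ) z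
      ∈ geodC ((M : Matrix (Fin 2) (Fin 2) ℤ) * A * (M⁻¹ : Matrix.SpecialLinearGroup (Fin 2) ℤ)) := by
  set A' := (M : Matrix (Fin 2) (Fin 2) ℤ) * A * (M⁻¹ : Matrix.SpecialLinearGroup (Fin 2) ℤ)
    with hA'
  have hdA' : A'.det ≠ 0 := by rw [det_conj]; exact hdet
  obtain ⟨hzim, heq⟩ := (mem_geodC_iff' A hdet z).mp hz
  rw [mem_geodC_iff' A' hdA']
  refine ⟨moebius_im M z hzim, ?_⟩
  have e00 : ((A' 0 0 : ℤ) : ℂ)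
      = (M 0 0 : ℂ)*(A 0 0 : ℂ)*(M 1 1 : ℂ) - (M 0 0 : ℂ)*(A 0 1 : ℂ)*(M 1 0 : ℂ)
        + (M 0 1 : ℂ)*(A 1 0 : ℂ)*(M 1 1 : ℂ) - (M 0 1 : ℂ)*(A 1 1 : ℂ)*(M 1 0 : ℂ) := by
    rw [hA']
    simp [Matrix.mul_apply, Fin.sum_univ_two, Matrix.adjugate_fin_two]
    push_cast; ring
  have e01 : ((A' 0 1 : ℤ) : ℂ)
      = (M 0 0 : ℂ)*((A 0 1 : ℂ)*(M 0 0 : ℂ) - (A 0 0 : ℂ)*(M 0 1 : ℂ))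
        + (M 0 1 : ℂ)*((A 1 1 : ℂ)*(M 0 0 : ℂ) - (A 1 0 : ℂ)*(M 0 1 : ℂ)) := by
    rw [hA']
    simp [Matrix.mul_apply, Fin.sum_univ_two, Matrix.adjugate_fin_two]
    push_cast; ring
  have e10 : ((A' 1 0 : ℤ) : ℂ)
      = (M 1 0 : ℂ)*((A 0 0 : ℂ)*(M 1 1 : ℂ) - (A 0 1 : ℂ)*(M 1 0 : ℂ))
        + (M 1 1 : ℂ)*((A 1 0 : ℂ)*(M 1 1 : ℂ) - (A 1 1 : ℂ)*(M 1 0 : ℂ)) := by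
    rw [hA']
    simp [Matrix.mul_apply, Fin.sum_univ_two, Matrix.adjugate_fin_two]
    push_cast; ring
  have e11 : ((A' 1 1 : ℤ) : ℂ)
      = (M 1 0 : ℂ)*((A 0 1 : ℂ)*(M 0 0 : ℂ) - (A 0 0 : ℂ)*(M 0 1 : ℂ))
        + (M 1 1 : ℂ)*((A 1 1 : ℂ)*(M 0 0 : ℂ) - (A 1 0 : ℂ)*(M 0 1 : ℂ)) := by
    rw [hA']
    simp [Matrix.mul_apply, Fin.sum_univ_two, Matrix.adjugate_fin_two]
    push_cast; ring
  have hwc : (starRingEnd ℂ) (moebius (M : Matrix (Fin 2) (Fin 2) ℤ) z)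
      = ((M 0 0 : ℂ) * (starRingEnd ℂ) z + (M 0 1 : ℂ))
        / ((M 1 0 : ℂ) * (starRingEnd ℂ) z + (M 1 1 : ℂ)) := by
    simp [moebius, map_div₀]
  have hd1 : ((M 1 0 : ℂ) * z + (M 1 1 : ℂ)) ≠ 0 := sl_denom_ne M z hzim
  have hd2 : ((M 1 0 : ℂ) * (starRingEnd ℂ) z + (M 1 1 : ℂ)) ≠ 0 := by
    intro h
    apply hd1
    have := congrArg (starRingEnd ℂ) h
    simpa using this
  rw [e00, e01, e10, e11, hwc, moebius]
  have := key (M 0 0 : ℂ) (M 0 1 : ℂ) (M 1 0 : ℂ) (M 1 1 : ℂ)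
    (A 0 0 : ℂ) (A 0 1 : ℂ) (A 1 0 : ℂ) (A 1 1 : ℂ) z ((starRingEnd ℂ) z) hd1 hd2 heq
  convert this using 2 <;> ring

lemma sl_detC (M : Matrix.SpecialLinearGroup (Fin 2) ℤ) :
    ((M : Matrix (Fin 2) (Fin 2) ℤ) 0 0 : ℂ) * (M 1 1 : ℂ) - (M 0 1 : ℂ) * (M 1 0 : ℂ) = 1 := by
  have := M.2
  rw [Matrix.det_fin_two] at this
  exact_mod_cast this

lemma moebius_inv (M : Matrix.SpecialLinearGroup (Fin 2) ℤ) (z : ℂ) (hz : 0 < z.im) :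
    moebius ((M⁻¹ : Matrix.SpecialLinearGroup (Fin 2) ℤ) : Matrix (Fin 2) (Fin 2) ℤ)
      (moebius (M : Matrix (Fin 2) (Fin 2) ℤ) z) = z := by
  have hd1 : ((M 1 0 : ℂ) * z + (M 1 1 : ℂ)) ≠ 0 := sl_denom_ne M z hz
  have hdet := sl_detC M
  have hnum : ((M 1 1 : ℂ)) * moebius (M : Matrix (Fin 2) (Fin 2) ℤ) z + (-(M 0 1) : ℤ)
      = z / ((M 1 0 : ℂ) * z + (M 1 1 : ℂ)) := by
    rw [moebius, mul_div_assoc', div_add' _ _ _ hd1, div_left_inj' hd1]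
    push_cast
    linear_combination (z * hdet)
  have hden : ((-(M 1 0) : ℤ) : ℂ) * moebius (M : Matrix (Fin 2) (Fin 2) ℤ) z + (M 0 0 : ℂ)
      = 1 / ((M 1 0 : ℂ) * z + (M 1 1 : ℂ)) := by
    rw [moebius, mul_div_assoc', div_add' _ _ _ hd1, div_left_inj' hd1]
    push_cast
    linear_combination (hdet)
  rw [moebius, inv_coe]
  simp only [Matrix.cons_val', Matrix.cons_val_zero, Matrix.cons_val_one, Matrix.head_cons,
    Matrix.empty_val', Matrix.cons_val_fin_one, Matrix.head_fin_const]
  rw [hnum, hden, div_div_div_cancel_right₀ hd1, div_one]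

lemma image_geodC (M : Matrix.SpecialLinearGroup (Fin 2) ℤ) (A : Matrix (Fin 2) (Fin 2) ℤ)
    (hdet : A.det ≠ 0) :
    moebius (M : Matrix (Fin 2) (Fin 2) ℤ) '' geodC A
      = geodC ((M : Matrix (Fin 2) (Fin 2) ℤ) * A * (M⁻¹ : Matrix.SpecialLinearGroup (Fin 2) ℤ)) := by
  apply Set.Subset.antisymm
  · rintro w ⟨z, hz, rfl⟩
    exact step M A hdet hz
  · intro w hw
    set A' := (M : Matrix (Fin 2) (Fin 2) ℤ) * A * (M⁻¹ : Matrix.SpecialLinearGroup (Fin 2) ℤ)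
      with hA'
    have hdA' : A'.det ≠ 0 := by rw [hA', det_conj]; exact hdet
    have h2 := step M⁻¹ A' hdA' hw
    have hback : ((M⁻¹ : Matrix.SpecialLinearGroup (Fin 2) ℤ) : Matrix (Fin 2) (Fin 2) ℤ) * A'
        * ((M⁻¹⁻¹ : Matrix.SpecialLinearGroup (Fin 2) ℤ) : Matrix (Fin 2) (Fin 2) ℤ) = A := by
      rw [inv_inv, hA']
      have h1 : ((M⁻¹ : Matrix.SpecialLinearGroup (Fin 2) ℤ) : Matrix (Fin 2) (Fin 2) ℤ)
          * (M : Matrix (Fin 2) (Fin 2) ℤ) = 1 := by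
        rw [← Matrix.SpecialLinearGroup.coe_mul, inv_mul_cancel]
        rfl
      have h2' : (M : Matrix (Fin 2) (Fin 2) ℤ)
          * ((M⁻¹ : Matrix.SpecialLinearGroup (Fin 2) ℤ) : Matrix (Fin 2) (Fin 2) ℤ) = 1 := by
        rw [← Matrix.SpecialLinearGroup.coe_mul, mul_inv_cancel]
        rfl
      calc ((M⁻¹ : Matrix.SpecialLinearGroup (Fin 2) ℤ) : Matrix (Fin 2) (Fin 2) ℤ)
            * ((M : Matrix (Fin 2) (Fin 2) ℤ) * A * (M⁻¹ : Matrix.SpecialLinearGroup (Fin 2) ℤ))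
            * (M : Matrix (Fin 2) (Fin 2) ℤ)
          = (((M⁻¹ : Matrix.SpecialLinearGroup (Fin 2) ℤ) : Matrix (Fin 2) (Fin 2) ℤ)
            * (M : Matrix (Fin 2) (Fin 2) ℤ)) * A
            * (((M⁻¹ : Matrix.SpecialLinearGroup (Fin 2) ℤ) : Matrix (Fin 2) (Fin 2) ℤ)
            * (M : Matrix (Fin 2) (Fin 2) ℤ)) := by
            simp only [Matrix.mul_assoc]
        _ = A := by rw [h1]; simp
    rw [hback] at h2
    refine ⟨_, h2, ?_⟩
    have := moebius_inv M⁻¹ w hw.1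
    rwa [inv_inv] at this

lemma rigid (N : ℤ) (hN : 0 < N) (A B : Matrix (Fin 2) (Fin 2) ℤ)
    (hA : A.trace = 0) (hB : B.trace = 0) (hdA : A.det = -N) (hdB : B.det = -N)
    (h : geodC A = geodC B) : A = B ∨ A = -B := by
  have hNne : (N : ℝ) ≠ 0 := by exact_mod_cast hN.ne'
  have hNpos : (0 : ℝ) < N := by exact_mod_cast hN
  have hdA' : A.det ≠ 0 := by rw [hdA]; simpa using hN.ne'
  have hdB' : B.det ≠ 0 := by rw [hdB]; simpa using hN.ne'
  have htrA : A 1 1 = -A 0 0 := by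
    rw [Matrix.trace_fin_two] at hA; linarith
  have htrB : B 1 1 = -B 0 0 := by
    rw [Matrix.trace_fin_two] at hB; linarith
  set a := (A 0 0 : ℝ) with ha_def
  set b := (A 0 1 : ℝ) with hb_def
  set c := (A 1 0 : ℝ) with hc_def
  set a' := (B 0 0 : ℝ) with ha'_def
  set b' := (B 0 1 : ℝ) with hb'_def
  set c' := (B 1 0 : ℝ) with hc'_def
  have haN : a ^ 2 + b * c = (N : ℝ) := by
    have h0 := hdA
    rw [Matrix.det_fin_two, htrA] at h0
    have h1 : (A 0 0 : ℝ) * (-(A 0 0 : ℝ)) - (A 0 1 : ℝ) * (A 1 0 : ℝ) = -(N : ℝ) := by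
      exact_mod_cast h0
    nlinarith [h1]
  have hbN : a' ^ 2 + b' * c' = (N : ℝ) := by
    have h0 := hdB
    rw [Matrix.det_fin_two, htrB] at h0
    have h1 : (B 0 0 : ℝ) * (-(B 0 0 : ℝ)) - (B 0 1 : ℝ) * (B 1 0 : ℝ) = -(N : ℝ) := by
      exact_mod_cast h0
    nlinarith [h1]
  have hpt : ∀ x y : ℝ, 0 < y →
      ((c * (x ^ 2 + y ^ 2) - 2 * a * x - b = 0) ↔
        (c' * (x ^ 2 + y ^ 2) - 2 * a' * x - b' = 0)) := by
    intro x y hy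
    have h1 := mem_geodC_iff A hA hdA' ⟨x, y⟩
    have h2 := mem_geodC_iff B hB hdB' ⟨x, y⟩
    rw [h] at h1
    have h3 := h1.symm.trans h2
    constructor
    · intro he
      exact (h3.mp ⟨hy, he⟩).2
    · intro he
      exact (h3.mpr ⟨hy, he⟩).2
  have conclude_pos : a' = a → b' = b → c' = c → A = B ∨ A = -B := by
    intro h1 h2 h3
    left
    have e1 : A 0 0 = B 0 0 := by
      have : (A 0 0 : ℝ) = (B 0 0 : ℝ) := h1.symm
      exact_mod_cast this
    have e2 : A 0 1 = B 0 1 := by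
      have : (A 0 1 : ℝ) = (B 0 1 : ℝ) := h2.symm
      exact_mod_cast this
    have e3 : A 1 0 = B 1 0 := by
      have : (A 1 0 : ℝ) = (B 1 0 : ℝ) := h3.symm
      exact_mod_cast this
    ext i j
    fin_cases i <;> fin_cases j
    · exact e1
    · exact e2
    · exact e3
    · show A 1 1 = B 1 1
      rw [htrA, htrB, e1]
  have conclude_neg : a' = -a → b' = -b → c' = -c → A = B ∨ A = -B := by
    intro h1 h2 h3
    right
    have e1 : A 0 0 = -B 0 0 := by
      have : (A 0 0 : ℝ) = -(B 0 0 : ℝ) := by rw [← ha_def, ← ha'_def, h1]; ring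
      exact_mod_cast this
    have e2 : A 0 1 = -B 0 1 := by
      have : (A 0 1 : ℝ) = -(B 0 1 : ℝ) := by rw [← hb_def, ← hb'_def, h2]; ring
      exact_mod_cast this
    have e3 : A 1 0 = -B 1 0 := by
      have : (A 1 0 : ℝ) = -(B 1 0 : ℝ) := by rw [← hc_def, ← hc'_def, h3]; ring
      exact_mod_cast this
    ext i j
    fin_cases i <;> fin_cases j
    · show A 0 0 = (-B) 0 0
      rw [Matrix.neg_apply]; exact e1
    · show A 0 1 = (-B) 0 1
      rw [Matrix.neg_apply]; exact e2
    · show A 1 0 = (-B) 1 0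
      rw [Matrix.neg_apply]; exact e3
    · show A 1 1 = (-B) 1 1
      rw [Matrix.neg_apply, htrA, htrB, e1]
  rcases eq_or_ne c 0 with hc | hc
  · -- vertical line case
    have haN' : a ^ 2 = (N : ℝ) := by rw [hc] at haN; linarith
    have ha : a ≠ 0 := by
      intro h0; rw [h0] at haN'; simp at haN'; exact hNne haN'.symm
    set x0 : ℝ := -b / (2 * a) with hx0
    have hx0a : x0 * (2 * a) = -b := by rw [hx0]; field_simp
    have hxA : ∀ y : ℝ, 0 < y → c * (x0 ^ 2 + y ^ 2) - 2 * a * x0 - b = 0 := by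
      intro y hy
      rw [hc]
      linear_combination -hx0a
    have e1 := (hpt x0 1 one_pos).mp (hxA 1 one_pos)
    have e2 := (hpt x0 2 two_pos).mp (hxA 2 two_pos)
    have hc' : c' = 0 := by linear_combination (e1 - e2) / (-3)
    have hbN' : a' ^ 2 = (N : ℝ) := by rw [hc'] at hbN; linarith
    have hthis : 2 * a' * x0 + b' = 0 := by
      rw [hc'] at e1; linarith [e1]
    have hb2 : a * b' - a' * b = 0 := by
      linear_combination a * hthis - a' * hx0a
    have hsq : (a' - a) * (a' + a) = 0 := by linear_combination hbN' - haN'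
    rcases mul_eq_zero.mp hsq with h1 | h1
    · have ha' : a' = a := by linarith
      have hbb : b' = b := by
        have : a * (b' - b) = 0 := by linear_combination hb2 + b * ha'
        rcases mul_eq_zero.mp this with h' | h'
        · exact absurd h' ha
        · linarith
      exact conclude_pos ha' hbb (by rw [hc', hc])
    · have ha' : a' = -a := by linarith
      have hbb : b' = -b := by
        have : a * (b' + b) = 0 := by linear_combination hb2 + b * ha'
        rcases mul_eq_zero.mp this with h' | h'
        · exact absurd h' ha
        · linarith
      exact conclude_neg ha' hbb (by rw [hc', hc]; ring)
  · -- circle case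
    set u : ℝ := a / c with hu
    set r : ℝ := Real.sqrt N / |c| with hr
    have hcpos : 0 < |c| := abs_pos.mpr hc
    have hrpos : 0 < r := div_pos (Real.sqrt_pos.mpr hNpos) hcpos
    have h1 : c * u = a := by rw [hu]; field_simp
    have h2 : c ^ 2 * r ^ 2 = (N : ℝ) := by
      rw [hr, div_pow, sq_abs, Real.sq_sqrt hNpos.le]
      field_simp
    have hc2 : c ^ 2 ≠ 0 := pow_ne_zero 2 hc
    have pt1 : c * (u ^ 2 + r ^ 2) - 2 * a * u - b = 0 := by
      have key : c ^ 2 * (c * (u ^ 2 + r ^ 2) - 2 * a * u - b) = 0 := by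
        linear_combination (c * (c * u + a) - 2 * a * c) * h1 + c * h2 - c * haN
      rcases mul_eq_zero.mp key with h' | h'
      · exact absurd h' hc2
      · exact h'
    have pt2 : c * ((u + 3 * r / 5) ^ 2 + (4 * r / 5) ^ 2)
        - 2 * a * (u + 3 * r / 5) - b = 0 := by
      have key : c ^ 2 * (c * ((u + 3 * r / 5) ^ 2 + (4 * r / 5) ^ 2)
          - 2 * a * (u + 3 * r / 5) - b) = 0 := by
        linear_combination (c * (c * u + a) - 2 * a * c + (6/5) * c ^ 2 * r) * h1
          + c * h2 - c * haN
      rcases mul_eq_zero.mp key with h' | h'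
      · exact absurd h' hc2
      · exact h'
    have e1 := (hpt u r hrpos).mp pt1
    have e2 := (hpt (u + 3 * r / 5) (4 * r / 5) (by linarith)).mp pt2
    have hcu : c' * u - a' = 0 := by
      have hdiff : (6 / 5) * r * (c' * u - a') = 0 := by linear_combination e2 - e1
      rcases mul_eq_zero.mp hdiff with h' | h'
      · have : r ≠ 0 := hrpos.ne'
        exact absurd (by linarith : r = 0) this
      · exact h'
    have h5 : c' * a - a' * c = 0 := by linear_combination c * hcu - c' * h1
    have h6 : c' * b - b' * c = 0 := by
      have h6c : c * (c' * b - b' * c) = 0 := by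
        linear_combination c ^ 2 * e1 - c' * (c * u + a) * h1 - c' * h2
          + 2 * a' * c * h1 - 2 * a * h5 + c' * haN
      rcases mul_eq_zero.mp h6c with h' | h'
      · exact absurd h' hc
      · exact h'
    have h7 : c' ^ 2 = c ^ 2 := by
      have hq : c' ^ 2 * (N : ℝ) = c ^ 2 * (N : ℝ) := by
        linear_combination -c' ^ 2 * haN + c ^ 2 * hbN + (c' * a + a' * c) * h5 + c' * c * h6
      exact mul_right_cancel₀ hNne hq
    have hsq : (c' - c) * (c' + c) = 0 := by linear_combination h7
    rcases mul_eq_zero.mp hsq with hcc | hcc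
    · have hcc' : c' = c := by linarith
      have haa : a' = a := by
        have : c * (a - a') = 0 := by linear_combination h5 - a * hcc'
        rcases mul_eq_zero.mp this with h' | h'
        · exact absurd h' hc
        · linarith
      have hbb : b' = b := by
        have : c * (b - b') = 0 := by linear_combination h6 - b * hcc'
        rcases mul_eq_zero.mp this with h' | h'
        · exact absurd h' hc
        · linarith
      exact conclude_pos haa hbb hcc'
    · have hcc' : c' = -c := by linarith
      have haa : a' = -a := by
        have : c * (a' + a) = 0 := by linear_combination -h5 + a * hcc'
        rcases mul_eq_zero.mp this with h' | h'
        · exact absurd h' hc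
        · linarith
      have hbb : b' = -b := by
        have : c * (b' + b) = 0 := by linear_combination -h6 + b * hcc'
        rcases mul_eq_zero.mp this with h' | h'
        · exact absurd h' hc
        · linarith
      exact conclude_neg haa hbb hcc'


lemma trace_conj (M : Matrix.SpecialLinearGroup (Fin 2) ℤ) (A : Matrix (Fin 2) (Fin 2) ℤ) :
    ((M : Matrix (Fin 2) (Fin 2) ℤ) * A * (M⁻¹ : Matrix.SpecialLinearGroup (Fin 2) ℤ)).trace
      = A.trace := by
  rw [Matrix.trace_mul_comm, ← Matrix.mul_assoc]
  have h1 : ((M⁻¹ : Matrix.SpecialLinearGroup (Fin 2) ℤ) : Matrix (Fin 2) (Fin 2) ℤ)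
      * (M : Matrix (Fin 2) (Fin 2) ℤ) = 1 := by
    rw [← Matrix.SpecialLinearGroup.coe_mul, inv_mul_cancel]
    rfl
  rw [h1, Matrix.one_mul]

theorem stmt_18 (N : ℤ) (hN : 0 < N) (A B : Matrix (Fin 2) (Fin 2) ℤ)
    (hA : A.trace = 0) (hB : B.trace = 0) (hdA : A.det = -N) (hdB : B.det = -N)
    (hconj : ∀ M : Matrix.SpecialLinearGroup (Fin 2) ℤ,
      (M : Matrix (Fin 2) (Fin 2) ℤ) * A * (M⁻¹ : Matrix.SpecialLinearGroup (Fin 2) ℤ) ≠ B ∧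
      (M : Matrix (Fin 2) (Fin 2) ℤ) * A * (M⁻¹ : Matrix.SpecialLinearGroup (Fin 2) ℤ) ≠ -B) :
    ∀ M : Matrix.SpecialLinearGroup (Fin 2) ℤ,
      moebius (M : Matrix (Fin 2) (Fin 2) ℤ) '' geodC A ≠ geodC B := by
  intro M hEq
  have hdA0 : A.det ≠ 0 := by rw [hdA]; simpa using hN.ne'
  rw [image_geodC M A hdA0] at hEq
  have htr' : ((M : Matrix (Fin 2) (Fin 2) ℤ) * A
      * (M⁻¹ : Matrix.SpecialLinearGroup (Fin 2) ℤ)).trace = 0 := by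
    rw [trace_conj, hA]
  have hdet' : ((M : Matrix (Fin 2) (Fin 2) ℤ) * A
      * (M⁻¹ : Matrix.SpecialLinearGroup (Fin 2) ℤ)).det = -N := by
    rw [det_conj, hdA]
  rcases rigid N hN _ B htr' hB hdet' hdB hEq with h' | h'
  · exact (hconj M).1 h'
  · exact (hconj M).2 h'
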